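/- The mean distance of the subKautz digraph sK(d,2) with d ≥ 3 equals (2d² + 3d − 1)/(d² + d), where the mean distance is the average of dist(u,v) over all ordered pairs (u,v) of vertices divided appropriately (here, by vertex-transitivity, the average of dist(u,v) over all v for a fixed u). -/
import Mathlib


/-- Vertex of `sK(d,2)`: an ordered pair `x₁x₂` with `x₁ ≠ x₂`. -/
abbrev sk2Vert {n : ℕ} (x : Fin 2 → Fin n) : Prop := x 0 ≠ x 1

/-- Arc of `sK(d,2)`: `x₁x₂ → x₂x₃` with `x₃ ∉ {x₁, x₂}`. -/
abbrev sk2Adj {n : ℕ} (x y : Fin 2 → Fin n) : Prop :=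
  y 0 = x 1 ∧ y 1 ≠ x 0 ∧ y 1 ≠ x 1

/-- A walk of length `k` in `sK(d,2)` from `u` to `v`. -/
abbrev sk2Walk {n : ℕ} (k : ℕ) (u v : Fin 2 → Fin n) : Prop :=
  ∃ w : Fin (k + 1) → Fin 2 → Fin n, w 0 = u ∧ w (Fin.last k) = v ∧
    (∀ i, sk2Vert (w i)) ∧ ∀ i j : Fin (k + 1), j.val = i.val + 1 → sk2Adj (w i) (w j)

/-- `v` is at distance exactly `m` from `u` in `sK(d,2)`. -/
abbrev sk2DistEq {n : ℕ} (u v : Fin 2 → Fin n) (m : ℕ) : Prop :=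
  sk2Walk m u v ∧ ∀ k < m, ¬ sk2Walk k u v

lemma walk_zero {n : ℕ} (u v : Fin 2 → Fin n) :
    sk2Walk 0 u v ↔ u = v ∧ sk2Vert u := by
  constructor
  · rintro ⟨w, h0, hl, hv, -⟩
    refine ⟨by rw [← h0, ← hl]; rfl, h0 ▸ hv 0⟩
  · rintro ⟨rfl, hu⟩
    exact ⟨fun _ => u, rfl, rfl, fun _ => hu,
      fun i j hij => absurd hij (by have := j.isLt; omega)⟩

lemma walk_succ {n k : ℕ} (u v : Fin 2 → Fin n) :
    sk2Walk (k+1) u v ↔ sk2Vert u ∧ ∃ m, sk2Adj u m ∧ sk2Walk k m v := by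
  constructor
  · rintro ⟨w, h0, hl, hv, ha⟩
    refine ⟨h0 ▸ hv 0, w 1, h0 ▸ ha 0 1 (by simp), fun i => w i.succ, ?_, ?_,
      fun i => hv _, ?_⟩
    · show w (Fin.succ 0) = w 1
      rw [Fin.succ_zero_eq_one]
    · show w (Fin.last k).succ = v
      rw [Fin.succ_last]; exact hl
    · intro i j hij
      exact ha i.succ j.succ (by simp [Fin.val_succ]; omega)
  · rintro ⟨hu, m, ham, w, h0, hl, hv, ha⟩
    refine ⟨Fin.cases u w, by simp, ?_, ?_, ?_⟩
    · rw [← Fin.succ_last]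
      simp only [Fin.cases_succ]
      exact hl
    · intro i
      cases i using Fin.cases with
      | zero => simpa using hu
      | succ i => simpa using hv i
    · intro i j hij
      cases i using Fin.cases with
      | zero =>
        have hj : j = (0 : Fin (k+1)).succ := by
          apply Fin.ext; simp at hij ⊢; omega
        subst hj
        simp only [Fin.cases_zero, Fin.cases_succ, h0]
        exact ham
      | succ i =>
        have hlt : i.val + 1 < k + 1 := by
          have := j.isLt; simp [Fin.val_succ] at hij; omega
        have hj : j = (⟨i.val + 1, hlt⟩ : Fin (k+1)).succ := by
          apply Fin.ext; simp [Fin.val_succ] at hij ⊢; omega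
        subst hj
        simp only [Fin.cases_succ]
        exact ha i ⟨i.val+1, hlt⟩ rfl

def pr {n : ℕ} (p q : Fin n) : Fin 2 → Fin n := ![p, q]

@[simp] lemma pr_zero {n : ℕ} (p q : Fin n) : pr p q 0 = p := rfl
@[simp] lemma pr_one {n : ℕ} (p q : Fin n) : pr p q 1 = q := rfl

lemma fresh3 {d : ℕ} (hd : 3 ≤ d) (a b c : Fin (d+1)) :
    ∃ x : Fin (d+1), x ≠ a ∧ x ≠ b ∧ x ≠ c := by
  by_contra h
  push_neg at h
  have hsub : (Finset.univ : Finset (Fin (d+1))) ⊆ {a, b, c} := by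
    intro x _
    simp only [Finset.mem_insert, Finset.mem_singleton]
    by_contra hx
    push_neg at hx
    exact hx.2.2 (h x hx.1 hx.2.1)
  have h1 := Finset.card_le_card hsub
  have h2 : ({a, b, c} : Finset (Fin (d+1))).card ≤ 3 := by
    have := Finset.card_insert_le a ({b, c} : Finset (Fin (d+1)))
    have := Finset.card_insert_le b ({c} : Finset (Fin (d+1)))
    simp only [Finset.card_singleton] at *
    omega
  simp only [Finset.card_univ, Fintype.card_fin] at h1
  omega

lemma sInf_eq_of {S : Set ℕ} {m : ℕ} (hm : m ∈ S) (h : ∀ k < m, k ∉ S) : sInf S = m :=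
  le_antisymm (Nat.sInf_le hm) (by
    by_contra hc
    push_neg at hc
    exact h _ hc (Nat.sInf_mem ⟨m, hm⟩))

def gdist {n : ℕ} (a b x y : Fin n) : ℕ :=
  if x = b then (if y = a then 4 else 1)
  else if x = a then (if y = b then 0 else 3)
  else if y = b then 3 else 2

section walks
variable {n : ℕ} (u v : Fin 2 → Fin n)

lemma walk1 : sk2Walk 1 u v ↔ sk2Vert u ∧ ∃ m, sk2Adj u m ∧ sk2Walk 0 m v := walk_succ u v
lemma walk2 : sk2Walk 2 u v ↔ sk2Vert u ∧ ∃ m, sk2Adj u m ∧ sk2Walk 1 m v := walk_succ u v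
lemma walk3 : sk2Walk 3 u v ↔ sk2Vert u ∧ ∃ m, sk2Adj u m ∧ sk2Walk 2 m v := walk_succ u v
lemma walk4 : sk2Walk 4 u v ↔ sk2Vert u ∧ ∃ m, sk2Adj u m ∧ sk2Walk 3 m v := walk_succ u v

end walks

lemma dist_eq {d : ℕ} (hd : 3 ≤ d) (u v : Fin 2 → Fin (d+1))
    (hu : sk2Vert u) (hv : sk2Vert v) :
    sInf {k | sk2Walk k u v} = gdist (u 0) (u 1) (v 0) (v 1) := by
  have hab : u 0 ≠ u 1 := hu
  have hxy : v 0 ≠ v 1 := hv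
  by_cases hxb : v 0 = u 1
  · by_cases hya : v 1 = u 0
    · -- distance 4
      have hg : gdist (u 0) (u 1) (v 0) (v 1) = 4 := by simp [gdist, hxb, hya, hab]
      rw [hg]
      obtain ⟨c, hca, hcb, -⟩ := fresh3 hd (u 0) (u 1) (u 1)
      obtain ⟨e, hea, heb, hec⟩ := fresh3 hd (u 0) (u 1) c
      refine sInf_eq_of ?_ ?_
      · show sk2Walk 4 u v
        simp only [walk4, walk3, walk2, walk1, walk_zero]
        exact ⟨hu, pr (u 1) c, ⟨rfl, hca, hcb⟩, hcb.symm, pr c e, ⟨rfl, heb, hec⟩,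
          hec.symm, pr e (u 1), ⟨rfl, hcb.symm, heb.symm⟩, heb, v,
          ⟨hxb, by rw [hya]; exact hea.symm, by rw [hya]; exact hab⟩, rfl, hv⟩
      · intro k hk
        interval_cases k
        · rw [Set.mem_setOf_eq, walk_zero]
          rintro ⟨h, -⟩
          subst h
          exact hab hya.symm
        · rw [Set.mem_setOf_eq]
          simp only [walk1, walk_zero]
          rintro ⟨-, m, ⟨-, hne, -⟩, rfl, -⟩
          exact hne hya
        · rw [Set.mem_setOf_eq]
          simp only [walk2, walk1, walk_zero]
          rintro ⟨-, m, ⟨-, -, hm⟩, -, m2, ⟨h20, -, -⟩, rfl, -⟩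
          rw [hxb] at h20
          exact hm h20.symm
        · rw [Set.mem_setOf_eq]
          simp only [walk3, walk2, walk1, walk_zero]
          rintro ⟨-, m1, ⟨h10, -, -⟩, -, m2, ⟨-, h2n, -⟩, -, m3, ⟨h30, -, -⟩, rfl, -⟩
          rw [hxb, ← h10] at h30
          exact h2n h30.symm
    · -- distance 1
      have hg : gdist (u 0) (u 1) (v 0) (v 1) = 1 := by simp [gdist, hxb, hya, hab]
      rw [hg]
      refine sInf_eq_of ?_ ?_
      · show sk2Walk 1 u v
        simp only [walk1, walk_zero]
        exact ⟨hu, v, ⟨hxb, hya, by rw [← hxb]; exact hxy.symm⟩, rfl, hv⟩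
      · intro k hk
        interval_cases k
        rw [Set.mem_setOf_eq, walk_zero]
        rintro ⟨h, -⟩
        subst h
        exact hab hxb
  · by_cases hxa : v 0 = u 0
    · by_cases hyb : v 1 = u 1
      · -- distance 0 : v = u
        have hg : gdist (u 0) (u 1) (v 0) (v 1) = 0 := by simp [gdist, hxb, hxa, hyb, hab]
        rw [hg]
        refine sInf_eq_of ?_ (fun k hk => absurd hk (Nat.not_lt_zero k))
        show sk2Walk 0 u v
        rw [walk_zero]
        refine ⟨?_, hu⟩
        funext i
        fin_cases i
        · exact hxa.symm
        · exact hyb.symm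
      · -- distance 3, type (a, y)
        have hg : gdist (u 0) (u 1) (v 0) (v 1) = 3 := by simp [gdist, hxb, hxa, hyb, hab]
        rw [hg]
        obtain ⟨c, hca, hcb, hcy⟩ := fresh3 hd (u 0) (u 1) (v 1)
        refine sInf_eq_of ?_ ?_
        · show sk2Walk 3 u v
          simp only [walk3, walk2, walk1, walk_zero]
          exact ⟨hu, pr (u 1) c, ⟨rfl, hca, hcb⟩, hcb.symm, pr c (u 0),
            ⟨rfl, hab, hca.symm⟩, hca, v,
            ⟨hxa, hcy.symm, by rw [← hxa]; exact hxy.symm⟩, rfl, hv⟩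
        · intro k hk
          interval_cases k
          · rw [Set.mem_setOf_eq, walk_zero]
            rintro ⟨h, -⟩
            subst h
            exact hyb rfl
          · rw [Set.mem_setOf_eq]
            simp only [walk1, walk_zero]
            rintro ⟨-, m, ⟨h0, -, -⟩, rfl, -⟩
            exact hxb h0
          · rw [Set.mem_setOf_eq]
            simp only [walk2, walk1, walk_zero]
            rintro ⟨-, m, ⟨-, hm1a, -⟩, -, m2, ⟨h20, -, -⟩, rfl, -⟩
            exact hm1a (by rw [← h20, hxa])
    · by_cases hyb : v 1 = u 1
      · -- distance 3, type (x, b)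
        have hg : gdist (u 0) (u 1) (v 0) (v 1) = 3 := by simp [gdist, hxb, hxa, hyb, hab]
        rw [hg]
        obtain ⟨c, hca, hcb, hcx⟩ := fresh3 hd (u 0) (u 1) (v 0)
        refine sInf_eq_of ?_ ?_
        · show sk2Walk 3 u v
          simp only [walk3, walk2, walk1, walk_zero]
          exact ⟨hu, pr (u 1) c, ⟨rfl, hca, hcb⟩, hcb.symm, pr c (v 0),
            ⟨rfl, hxb, hcx.symm⟩, hcx, v,
            ⟨rfl, by rw [hyb]; exact hcb.symm, hxy.symm⟩, rfl, hv⟩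
        · intro k hk
          interval_cases k
          · rw [Set.mem_setOf_eq, walk_zero]
            rintro ⟨h, -⟩
            subst h
            exact hxa rfl
          · rw [Set.mem_setOf_eq]
            simp only [walk1, walk_zero]
            rintro ⟨-, m, ⟨h0, -, -⟩, rfl, -⟩
            exact hxb h0
          · rw [Set.mem_setOf_eq]
            simp only [walk2, walk1, walk_zero]
            rintro ⟨-, m, ⟨hm0, -, -⟩, -, m2, ⟨-, h2a, -⟩, rfl, -⟩
            exact h2a (by rw [hyb, ← hm0])
      · -- distance 2
        have hg : gdist (u 0) (u 1) (v 0) (v 1) = 2 := by simp [gdist, hxb, hxa, hyb, hab]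
        rw [hg]
        refine sInf_eq_of ?_ ?_
        · show sk2Walk 2 u v
          simp only [walk2, walk1, walk_zero]
          exact ⟨hu, pr (u 1) (v 0), ⟨rfl, hxa, hxb⟩, Ne.symm hxb, v,
            ⟨rfl, hyb, hxy.symm⟩, rfl, hv⟩
        · intro k hk
          interval_cases k
          · rw [Set.mem_setOf_eq, walk_zero]
            rintro ⟨h, -⟩
            subst h
            exact hxa rfl
          · rw [Set.mem_setOf_eq]
            simp only [walk1, walk_zero]
            rintro ⟨-, m, ⟨h0, -, -⟩, rfl, -⟩
            exact hxb h0

lemma sum_ite2 {n : ℕ} (p q : Fin n) (hpq : p ≠ q) (A B C : ℕ) :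
    ∑ x : Fin n, (if x = p then A else if x = q then B else C)
      = A + B + (n - 2) * C := by
  classical
  have huniv : (Finset.univ : Finset (Fin n))
      = insert p (insert q (Finset.univ \ {p, q})) := by
    ext x
    simp only [Finset.mem_univ, Finset.mem_insert, Finset.mem_sdiff, Finset.mem_singleton,
      true_iff, true_and]
    by_cases h1 : x = p
    · tauto
    · by_cases h2 : x = q <;> tauto
  rw [huniv, Finset.sum_insert, Finset.sum_insert]
  · have hconst : ∀ x ∈ Finset.univ \ ({p, q} : Finset (Fin n)),
        (if x = p then A else if x = q then B else C) = C := by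
      intro x hx
      simp only [Finset.mem_sdiff, Finset.mem_insert, Finset.mem_singleton] at hx
      push_neg at hx
      rw [if_neg hx.2.1, if_neg hx.2.2]
    rw [Finset.sum_congr rfl hconst, Finset.sum_const]
    have hcard : (Finset.univ \ ({p, q} : Finset (Fin n))).card = n - 2 := by
      rw [Finset.card_sdiff_of_subset (Finset.subset_univ _), Finset.card_univ, Fintype.card_fin]
      rw [Finset.card_insert_of_notMem (by simpa using hpq), Finset.card_singleton]
    rw [hcard, if_pos rfl, if_neg (Ne.symm hpq), if_pos rfl, smul_eq_mul]
    omega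
  · simp
  · simp [hpq]


/-- The mean distance of the subKautz digraph `sK(d,2)` with `d ≥ 3` is
`(2d² + 3d − 1)/(d² + d)`: for any fixed vertex `u` (by vertex-transitivity), the
average over all vertices `v` of the distance `dist(u,v)` (the least length of a walk
from `u` to `v`) equals this value. -/
theorem stmt18 (d : ℕ) (hd : 3 ≤ d)
    (u : Fin 2 → Fin (d + 1)) (hu : sk2Vert u) :
    ((∑ v : {v : Fin 2 → Fin (d + 1) // sk2Vert v},
        (sInf {k : ℕ | sk2Walk k u v.val} : ℕ) : ℕ) : ℚ) / ((d : ℚ) ^ 2 + d) =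
      (2 * (d : ℚ) ^ 2 + 3 * d - 1) / ((d : ℚ) ^ 2 + d) := by
  classical
  have hab : u 0 ≠ u 1 := hu
  have hsum : (∑ v : {v : Fin 2 → Fin (d + 1) // sk2Vert v},
      sInf {k : ℕ | sk2Walk k u v.val}) = 2 * d ^ 2 + 3 * d - 1 := by
    have key : ∀ v : {v : Fin 2 → Fin (d + 1) // sk2Vert v},
        sInf {k : ℕ | sk2Walk k u v.val} = gdist (u 0) (u 1) (v.val 0) (v.val 1) :=
      fun v => dist_eq hd u v.val hu v.2
    rw [Finset.sum_congr rfl (fun v _ => key v)]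
    rw [← Finset.sum_subtype (s := Finset.univ.filter fun v : Fin 2 → Fin (d+1) => sk2Vert v)
      (fun v => by simp) (fun v => gdist (u 0) (u 1) (v 0) (v 1))]
    rw [Finset.sum_filter]
    rw [Fintype.sum_equiv (finTwoArrowEquiv (Fin (d+1)))
      _ (fun p : Fin (d+1) × Fin (d+1) => if p.1 ≠ p.2 then gdist (u 0) (u 1) p.1 p.2 else 0)
      (fun v => by simp [finTwoArrowEquiv, sk2Vert])]
    rw [Fintype.sum_prod_type]
    have inner : ∀ x : Fin (d+1),
        (∑ y : Fin (d+1), if x ≠ y then gdist (u 0) (u 1) x y else 0)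
          = if x = u 1 then (0 + 4 + (d + 1 - 2) * 1)
            else if x = u 0 then (0 + 0 + (d + 1 - 2) * 3)
            else (0 + 3 + (d + 1 - 2) * 2) := by
      intro x
      by_cases hx1 : x = u 1
      · rw [if_pos hx1]
        have hterm : ∀ y : Fin (d+1), (if x ≠ y then gdist (u 0) (u 1) x y else 0)
            = (if y = u 1 then 0 else if y = u 0 then 4 else 1) := by
          intro y
          by_cases h1 : y = u 1
          · rw [if_neg (not_not_intro (by rw [hx1, h1])), if_pos h1]
          · have hxy : x ≠ y := by rw [hx1]; exact fun h => h1 h.symm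
            rw [if_pos hxy, if_neg h1]
            show gdist (u 0) (u 1) x y = if y = u 0 then 4 else 1
            rw [gdist, if_pos hx1]
        rw [Finset.sum_congr rfl (fun y _ => hterm y)]
        exact sum_ite2 (u 1) (u 0) (Ne.symm hab) 0 4 1
      · by_cases hx0 : x = u 0
        · rw [if_neg hx1, if_pos hx0]
          have hterm : ∀ y : Fin (d+1), (if x ≠ y then gdist (u 0) (u 1) x y else 0)
              = (if y = u 0 then 0 else if y = u 1 then 0 else 3) := by
            intro y
            by_cases h1 : y = u 0
            · rw [if_neg (not_not_intro (by rw [hx0, h1])), if_pos h1]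
            · have hxy : x ≠ y := by rw [hx0]; exact fun h => h1 h.symm
              rw [if_pos hxy, if_neg h1]
              show gdist (u 0) (u 1) x y = if y = u 1 then 0 else 3
              rw [gdist, if_neg hx1, if_pos hx0]
          rw [Finset.sum_congr rfl (fun y _ => hterm y)]
          exact sum_ite2 (u 0) (u 1) hab 0 0 3
        · rw [if_neg hx1, if_neg hx0]
          have hterm : ∀ y : Fin (d+1), (if x ≠ y then gdist (u 0) (u 1) x y else 0)
              = (if y = x then 0 else if y = u 1 then 3 else 2) := by
            intro y
            by_cases h1 : y = x
            · rw [if_neg (not_not_intro h1.symm), if_pos h1]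
            · rw [if_pos (fun h => h1 h.symm), if_neg h1]
              show gdist (u 0) (u 1) x y = if y = u 1 then 3 else 2
              rw [gdist, if_neg hx1, if_neg hx0]
          rw [Finset.sum_congr rfl (fun y _ => hterm y)]
          exact sum_ite2 x (u 1) hx1 0 3 2
    rw [Finset.sum_congr rfl (fun x _ => inner x)]
    rw [sum_ite2 (u 1) (u 0) (Ne.symm hab)]
    have h2 : 2 ≤ d + 1 := by omega
    have h1 : 1 ≤ 2 * d ^ 2 + 3 * d :=
      le_trans (by omega) (Nat.le_add_left (3 * d) (2 * d ^ 2))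
    zify [h2, h1]
    ring
  rw [hsum]
  have h1 : 1 ≤ 2 * d ^ 2 + 3 * d :=
    le_trans (by omega) (Nat.le_add_left (3 * d) (2 * d ^ 2))
  rw [Nat.cast_sub h1]
  push_cast
  ring_nf
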